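/- For every ρ∈(0,1), every ε∈(0,1) and every r∈[0, 2(1+ε)/γ]: 0 ≤ (1/α(ρ))·ψ_ρ((α(ρ)/ρ)·r) ≤ ε/γ + ln 2/(γ·|ln ρ|) + (1/γ)·√(2/(π·|ln ρ|)). -/

import Mathlib

open MeasureTheory ProbabilityTheory Real

noncomputable section

namespace BernoulliPrior

/-- Standard Gaussian measure on ℝ. -/
def stdG : Measure ℝ := gaussianReal 0 1

/-- The Bernoulli prior (1−ρ)δ₀ + ρδ₁. -/
def bern (ρ : ℝ) : Measure ℝ :=
  ENNReal.ofReal (1 - ρ) • Measure.dirac 0 + ENNReal.ofReal ρ • Measure.dirac 1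

/-- ψ_ρ(r) = E[ln(1 − ρ + ρ exp(−r/2 + r X* + √r Z))]. -/
def psiB (ρ r : ℝ) : ℝ :=
  ∫ xs, ∫ z, Real.log (1 - ρ + ρ * Real.exp (-r / 2 + r * xs + Real.sqrt r * z))
    ∂stdG ∂(bern ρ)

lemma integrable_dirac'' (f : ℝ → ℝ) (a : ℝ) : Integrable f (Measure.dirac a) := by
  have h : f =ᵐ[Measure.dirac a] fun _ => f a := by
    rw [Filter.EventuallyEq, MeasureTheory.ae_dirac_eq]
    exact Filter.eventually_pure.2 rfl
  exact (integrable_const (f a)).congr h.symm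

lemma bern_integral {ρ : ℝ} (h0 : 0 ≤ ρ) (h1 : ρ ≤ 1) (f : ℝ → ℝ) :
    ∫ x, f x ∂(bern ρ) = (1 - ρ) * f 0 + ρ * f 1 := by
  unfold bern
  rw [integral_add_measure ((integrable_dirac'' f 0).smul_measure ENNReal.ofReal_ne_top)
    ((integrable_dirac'' f 1).smul_measure ENNReal.ofReal_ne_top),
    integral_smul_measure, integral_smul_measure, integral_dirac, integral_dirac,
    ENNReal.toReal_ofReal (by linarith), ENNReal.toReal_ofReal h0]
  simp [smul_eq_mul]

lemma pdf_mul_exp (m t z : ℝ) :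
    gaussianPDFReal m 1 z * Real.exp (t * z)
      = Real.exp (m * t + t ^ 2 / 2) * gaussianPDFReal (m + t) 1 z := by
  simp only [gaussianPDFReal, NNReal.coe_one, mul_one]
  rw [mul_assoc, ← Real.exp_add, mul_left_comm, ← Real.exp_add]
  congr 1
  ring

lemma integrable_pdf_mul_exp (m t : ℝ) :
    Integrable (fun z => gaussianPDFReal m 1 z * Real.exp (t * z)) := by
  simp_rw [pdf_mul_exp]
  exact (integrable_gaussianPDFReal _ _).const_mul _

lemma integral_pdf_mul_exp (m t : ℝ) :
    ∫ z, gaussianPDFReal m 1 z * Real.exp (t * z) = Real.exp (m * t + t ^ 2 / 2) := by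
  simp_rw [pdf_mul_exp]
  rw [integral_const_mul, integral_gaussianPDFReal_eq_one _ one_ne_zero, mul_one]

lemma integral_gaussianReal_eq (m : ℝ) (g : ℝ → ℝ) :
    ∫ z, g z ∂(gaussianReal m 1) = ∫ z, gaussianPDFReal m 1 z * g z := by
  rw [gaussianReal_of_var_ne_zero _ one_ne_zero]
  have h1 : Measure.withDensity ℙ (gaussianPDF m 1)
      = Measure.withDensity ℙ (fun x => ((gaussianPDFReal m 1 x).toNNReal : ENNReal)) := rfl
  rw [h1, integral_withDensity_eq_integral_smul (measurable_gaussianPDFReal m 1).real_toNNReal g]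
  congr 1
  ext z
  rw [NNReal.smul_def, smul_eq_mul, Real.coe_toNNReal _ (gaussianPDFReal_nonneg _ _ _)]

lemma pdf_shift (s : ℝ) (g : ℝ → ℝ) :
    ∫ z, gaussianPDFReal s 1 z * g z = ∫ z, gaussianPDFReal 0 1 z * g (z + s) := by
  rw [← integral_add_right_eq_self (fun z => gaussianPDFReal s 1 z * g z) s]
  congr 1
  ext z
  rw [gaussianPDFReal_add, sub_self]

lemma integrable_pdf_mul (m : ℝ) {a b c t₁ t₂ t₃ : ℝ} (ha : 0 ≤ a) (hb : 0 ≤ b) (hc : 0 ≤ c)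
    {g : ℝ → ℝ} (hg : Measurable g)
    (hbd : ∀ z, |g z| ≤ a * Real.exp (t₁ * z) + b * Real.exp (t₂ * z) + c * Real.exp (t₃ * z)) :
    Integrable (fun z => gaussianPDFReal m 1 z * g z) := by
  refine Integrable.mono (g := fun z => gaussianPDFReal m 1 z *
      (a * Real.exp (t₁ * z) + b * Real.exp (t₂ * z) + c * Real.exp (t₃ * z))) ?_ ?_ ?_
  · have := (((integrable_pdf_mul_exp m t₁).const_mul a).add
      ((integrable_pdf_mul_exp m t₂).const_mul b)).add ((integrable_pdf_mul_exp m t₃).const_mul c)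
    refine this.congr (Filter.Eventually.of_forall fun z => ?_)
    simp only [Pi.add_apply]
    ring
  · exact ((measurable_gaussianPDFReal m 1).mul hg).aestronglyMeasurable
  · refine Filter.Eventually.of_forall fun z => ?_
    have hp := gaussianPDFReal_nonneg m 1 z
    have h2 := hbd z
    have h3 : 0 ≤ a * Real.exp (t₁ * z) + b * Real.exp (t₂ * z) + c * Real.exp (t₃ * z) := by
      positivity
    rw [Real.norm_eq_abs, Real.norm_eq_abs, abs_mul, abs_of_nonneg hp,
      abs_of_nonneg (mul_nonneg hp h3)]
    exact mul_le_mul_of_nonneg_left h2 hp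

lemma integral_pdf_mul_max :
    ∫ z, gaussianPDFReal 0 1 z * max 0 z = (Real.sqrt (2 * π))⁻¹ := by
  have key : ∫ z, max 0 z * Real.exp (-z ^ 2 / 2) = 1 := by
    have hsplit : ∫ z, max 0 z * Real.exp (-z ^ 2 / 2)
        = ∫ z in Set.Ioi (0:ℝ), z * Real.exp (-z ^ 2 / 2) := by
      rw [← integral_indicator measurableSet_Ioi]
      congr 1
      ext z
      by_cases hz : z ∈ Set.Ioi (0:ℝ)
      · rw [Set.indicator_of_mem hz, max_eq_right (le_of_lt hz)]
      · rw [Set.indicator_of_notMem hz, max_eq_left (by simpa using hz), zero_mul]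
    rw [hsplit]
    have hderiv : ∀ x ∈ Set.Ioi (0:ℝ),
        HasDerivAt (fun z => -Real.exp (-z ^ 2 / 2)) (x * Real.exp (-x ^ 2 / 2)) x := by
      intro x _
      have h1 : HasDerivAt (fun z : ℝ => -z ^ 2 / 2) (-x) x := by
        have := ((hasDerivAt_pow 2 x).neg).div_const 2
        simpa using this.congr_deriv (by ring)
      have := (Real.hasDerivAt_exp (-x ^ 2 / 2)).comp x h1
      exact (this.neg).congr_deriv (by ring)
    have hint : IntegrableOn (fun x : ℝ => x * Real.exp (-x ^ 2 / 2)) (Set.Ioi 0) := by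
      have : Integrable (fun x : ℝ => x * Real.exp (-(1/2) * x ^ 2)) :=
        integrable_mul_exp_neg_mul_sq (by norm_num)
      refine (this.congr (Filter.Eventually.of_forall fun x => ?_)).integrableOn
      ring_nf
    have htend : Filter.Tendsto (fun z => -Real.exp (-z ^ 2 / 2)) Filter.atTop (nhds 0) := by
      rw [show (0:ℝ) = -0 by ring]
      refine Filter.Tendsto.neg ?_
      have h1 : Filter.Tendsto (fun z : ℝ => z ^ 2 / 2) Filter.atTop Filter.atTop :=
        (Filter.tendsto_pow_atTop (by norm_num)).atTop_div_const (by norm_num)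
      have := Real.tendsto_exp_neg_atTop_nhds_zero.comp h1
      refine this.congr fun z => ?_
      simp [Function.comp, neg_div]
    have hcont : ContinuousWithinAt (fun z => -Real.exp (-z ^ 2 / 2)) (Set.Ici 0) 0 :=
      Continuous.continuousWithinAt (by continuity)
    have := integral_Ioi_of_hasDerivAt_of_tendsto hcont hderiv hint htend
    rw [this]
    norm_num
  calc ∫ z, gaussianPDFReal 0 1 z * max 0 z
      = ∫ z, (Real.sqrt (2 * π))⁻¹ * (max 0 z * Real.exp (-z ^ 2 / 2)) := by
        congr 1; ext z; simp only [gaussianPDFReal, NNReal.coe_one, mul_one, sub_zero]; ring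
    _ = (Real.sqrt (2 * π))⁻¹ := by rw [integral_const_mul, key, mul_one]

lemma max_le_exp (x : ℝ) : max 0 x ≤ Real.exp x := by
  rcases le_or_gt x 0 with h | h
  · rw [max_eq_left h]
    exact (Real.exp_pos x).le
  · rw [max_eq_right h.le]
    linarith [Real.add_one_le_exp x]

lemma core {ρ r : ℝ} (h0 : 0 < ρ) (h1 : ρ < 1) (hr : 0 ≤ r) :
    0 ≤ psiB ρ r ∧ psiB ρ r ≤
      ρ * (Real.log 2 + max 0 (Real.log ρ + r / 2) + Real.sqrt r * (Real.sqrt (2 * π))⁻¹) := by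
  set s := Real.sqrt r with hs
  have hs0 : 0 ≤ s := Real.sqrt_nonneg r
  have hs2 : s * s = r := Real.mul_self_sqrt hr
  set L : ℝ → ℝ := fun z => 1 - ρ + ρ * Real.exp (-r / 2 + s * z) with hLdef
  have h1ρ : 0 < 1 - ρ := by linarith
  have hLpos : ∀ z, 0 < L z := fun z => by
    have := Real.exp_pos (-r / 2 + s * z)
    simp only [hLdef]
    nlinarith
  have hLmeas : Measurable L := by
    simp only [hLdef]; fun_prop
  have hlogmeas : Measurable (fun z => Real.log (L z)) := Real.measurable_log.comp hLmeas
  set C1 : ℝ := -Real.log (1 - ρ) with hC1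
  set C2 : ℝ := ρ * Real.exp (-r / 2) with hC2
  have hC1n : 0 ≤ C1 := by
    simp only [hC1]
    rw [neg_nonneg]
    exact Real.log_nonpos (by linarith) (by linarith)
  have hC2n : 0 ≤ C2 := by positivity
  -- pointwise facts about L
  have hLle : ∀ z, L z ≤ 1 + C2 * Real.exp (s * z) := by
    intro z
    simp only [hLdef, hC2]
    rw [Real.exp_add]
    nlinarith [Real.exp_pos (-r / 2), Real.exp_pos (s * z)]
  have hlog_ub : ∀ z, Real.log (L z) ≤ C2 * Real.exp (s * z) - ρ := by
    intro z
    have h := Real.log_le_sub_one_of_pos (hLpos z)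
    have : L z - 1 = C2 * Real.exp (s * z) - ρ := by
      simp only [hLdef, hC2]
      rw [mul_assoc, ← Real.exp_add]
      ring_nf
    linarith
  have hlog_lb : ∀ z, -C1 ≤ Real.log (L z) := by
    intro z
    simp only [hC1, neg_neg]
    refine Real.log_le_log h1ρ ?_
    simp only [hLdef]
    nlinarith [Real.exp_pos (-r / 2 + s * z)]
  have hlogbd : ∀ z, |Real.log (L z)|
      ≤ C1 * Real.exp (0 * z) + C2 * Real.exp (s * z) + 0 * Real.exp (0 * z) := by
    intro z
    simp only [zero_mul, Real.exp_zero, mul_one, add_zero]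
    rw [abs_le]
    refine ⟨?_, ?_⟩
    · nlinarith [hlog_lb z, mul_nonneg hC2n (Real.exp_pos (s * z)).le, hC1n]
    · nlinarith [hlog_ub z, h0.le, hC1n]
  have hInt0 : Integrable (fun z => gaussianPDFReal 0 1 z * Real.log (L z)) :=
    integrable_pdf_mul 0 hC1n hC2n le_rfl hlogmeas hlogbd
  have hInts : Integrable (fun z => gaussianPDFReal s 1 z * Real.log (L z)) :=
    integrable_pdf_mul s hC1n hC2n le_rfl hlogmeas hlogbd
  -- key density identity
  have hkey : ∀ z, gaussianPDFReal 0 1 z * L z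
      = (1 - ρ) * gaussianPDFReal 0 1 z + ρ * gaussianPDFReal s 1 z := by
    intro z
    have hpme := pdf_mul_exp 0 s z
    simp only [zero_mul, zero_add] at hpme
    simp only [hLdef]
    rw [mul_add, mul_comm (gaussianPDFReal 0 1 z) ((1:ℝ) - ρ)]
    congr 1
    rw [show -r / 2 + s * z = s * z + (-r / 2) by ring, Real.exp_add, show
      gaussianPDFReal 0 1 z * (ρ * (Real.exp (s * z) * Real.exp (-r / 2)))
        = ρ * Real.exp (-r / 2) * (gaussianPDFReal 0 1 z * Real.exp (s * z)) by ring, hpme]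
    rw [show s ^ 2 / 2 = r / 2 by rw [sq, hs2]]
    have hone : Real.exp (-r / 2) * Real.exp (r / 2) = 1 := by
      rw [← Real.exp_add, show -r / 2 + r / 2 = (0:ℝ) by ring, Real.exp_zero]
    linear_combination (ρ * gaussianPDFReal s 1 z) * hone
  have hfun : (fun z => gaussianPDFReal 0 1 z * (L z - 1))
      = fun z => ((1 - ρ) * gaussianPDFReal 0 1 z + ρ * gaussianPDFReal s 1 z)
          - gaussianPDFReal 0 1 z := by
    funext z
    rw [mul_sub, hkey z, mul_one]
  have hIa : Integrable (fun z => (1 - ρ) * gaussianPDFReal 0 1 z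
      + ρ * gaussianPDFReal s 1 z) := by
    exact ((integrable_gaussianPDFReal 0 1).const_mul _).add
      ((integrable_gaussianPDFReal s 1).const_mul _)
  have hIntL1 : Integrable (fun z => gaussianPDFReal 0 1 z * (L z - 1)) := by
    rw [hfun]
    exact hIa.sub (integrable_gaussianPDFReal 0 1)
  have hIL1 : ∫ z, gaussianPDFReal 0 1 z * (L z - 1) = 0 := by
    rw [hfun, integral_sub hIa (integrable_gaussianPDFReal 0 1),
      integral_add ((integrable_gaussianPDFReal 0 1).const_mul _)
        ((integrable_gaussianPDFReal s 1).const_mul _),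
      integral_const_mul, integral_const_mul,
      integral_gaussianPDFReal_eq_one _ one_ne_zero,
      integral_gaussianPDFReal_eq_one _ one_ne_zero]
    ring
  -- psiB decomposition
  have hpsi : psiB ρ r
      = (1 - ρ) * (∫ z, gaussianPDFReal 0 1 z * Real.log (L z))
        + ρ * (∫ z, gaussianPDFReal s 1 z * Real.log (L z)) := by
    unfold psiB stdG
    rw [bern_integral h0.le h1.le]
    have hA : (∫ z, Real.log (1 - ρ + ρ * Real.exp (-r / 2 + r * 0 + Real.sqrt r * z))
          ∂gaussianReal 0 1) = ∫ z, gaussianPDFReal 0 1 z * Real.log (L z) := by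
      rw [integral_gaussianReal_eq]
      congr 1
      funext z
      simp only [hLdef, ← hs]
      norm_num
    have hB : (∫ z, Real.log (1 - ρ + ρ * Real.exp (-r / 2 + r * 1 + Real.sqrt r * z))
          ∂gaussianReal 0 1) = ∫ z, gaussianPDFReal s 1 z * Real.log (L z) := by
      rw [pdf_shift s (fun z => Real.log (L z)), integral_gaussianReal_eq]
      congr 1
      funext z
      simp only [hLdef]
      have he : -r / 2 + r * 1 + Real.sqrt r * z = -r / 2 + s * (z + s) := by
        rw [mul_add, hs2, ← hs]
        ring
      rw [he]
    rw [hA, hB]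
  constructor
  · -- lower bound
    have hxlogx : ∀ z, gaussianPDFReal 0 1 z * (L z - 1)
        ≤ gaussianPDFReal 0 1 z * (L z * Real.log (L z)) := by
      intro z
      refine mul_le_mul_of_nonneg_left ?_ (gaussianPDFReal_nonneg 0 1 z)
      have hx := Real.log_le_sub_one_of_pos (inv_pos.2 (hLpos z))
      rw [Real.log_inv] at hx
      have hL := hLpos z
      have h3 : L z * (-Real.log (L z)) ≤ L z * ((L z)⁻¹ - 1) :=
        mul_le_mul_of_nonneg_left hx hL.le
      rw [mul_sub, mul_inv_cancel₀ hL.ne'] at h3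
      nlinarith
    have hIntLlogL : Integrable (fun z => gaussianPDFReal 0 1 z * (L z * Real.log (L z))) := by
      refine integrable_pdf_mul 0 (t₁ := 0) (t₂ := s) (t₃ := 2 * s) hC1n
        (by positivity : (0:ℝ) ≤ C2 + C1 * C2 + C2) (by positivity : (0:ℝ) ≤ C2 * C2)
        (hLmeas.mul hlogmeas) ?_
      intro z
      have hA := hlogbd z
      have hB := hLle z
      have hL := hLpos z
      have he : Real.exp (2 * s * z) = Real.exp (s * z) * Real.exp (s * z) := by
        rw [← Real.exp_add]; ring_nf
      rw [abs_mul, abs_of_pos hL]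
      simp only [zero_mul, Real.exp_zero, mul_one] at hA ⊢
      rw [he]
      nlinarith [abs_nonneg (Real.log (L z)), Real.exp_pos (s * z),
        mul_le_mul hB hA (abs_nonneg _) (by positivity : (0:ℝ) ≤ 1 + C2 * Real.exp (s*z)),
        le_abs_self (Real.log (L z)), neg_abs_le (Real.log (L z))]
    have hsum : ∫ z, gaussianPDFReal 0 1 z * (L z * Real.log (L z))
        = (1 - ρ) * (∫ z, gaussianPDFReal 0 1 z * Real.log (L z))
          + ρ * (∫ z, gaussianPDFReal s 1 z * Real.log (L z)) := by
      have hfe : (fun z => gaussianPDFReal 0 1 z * (L z * Real.log (L z)))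
          = fun z => (1 - ρ) * (gaussianPDFReal 0 1 z * Real.log (L z))
              + ρ * (gaussianPDFReal s 1 z * Real.log (L z)) := by
        funext z
        linear_combination Real.log (L z) * hkey z
      rw [hfe, integral_add (hInt0.const_mul _) (hInts.const_mul _),
        integral_const_mul, integral_const_mul]
    have hm := integral_mono hIntL1 hIntLlogL hxlogx
    rw [hIL1, hsum] at hm
    rw [hpsi]
    linarith
  · -- upper bound
    have hI0le : (∫ z, gaussianPDFReal 0 1 z * Real.log (L z)) ≤ 0 := by
      have hm := integral_mono hInt0 hIntL1 fun z =>
        mul_le_mul_of_nonneg_left (Real.log_le_sub_one_of_pos (hLpos z))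
          (gaussianPDFReal_nonneg 0 1 z)
      exact le_of_le_of_eq hm hIL1
    -- upper bound on the shifted term
    set v : ℝ → ℝ := fun z => Real.log ρ + (-r / 2 + s * z) with hv
    have hlogL_le : ∀ z, Real.log (L z) ≤ Real.log 2 + max 0 (v z) := by
      intro z
      have hexp : ρ * Real.exp (-r / 2 + s * z) = Real.exp (v z) := by
        simp only [hv]
        conv_rhs => rw [Real.exp_add, Real.exp_log h0]
      have hLle2 : L z ≤ 2 * Real.exp (max 0 (v z)) := by
        have e1 : (1:ℝ) ≤ Real.exp (max 0 (v z)) := by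
          rw [← Real.exp_zero]
          exact Real.exp_le_exp.2 (le_max_left _ _)
        have e2 : Real.exp (v z) ≤ Real.exp (max 0 (v z)) :=
          Real.exp_le_exp.2 (le_max_right _ _)
        simp only [hLdef]
        rw [hexp]
        linarith
      calc Real.log (L z) ≤ Real.log (2 * Real.exp (max 0 (v z))) :=
            Real.log_le_log (hLpos z) hLle2
        _ = Real.log 2 + max 0 (v z) := by
            rw [Real.log_mul (by norm_num) (Real.exp_ne_zero _), Real.log_exp]
    have hvmeas : Measurable fun z => Real.log 2 + max 0 (v z) := by
      simp only [hv]; fun_prop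
    have hmaxmeas : Measurable fun z => max 0 (v z) := by
      simp only [hv]; fun_prop
    have hEv : ∀ z, Real.exp (v z) = Real.exp (Real.log ρ + -r / 2) * Real.exp (s * z) := by
      intro z
      rw [hv, ← Real.exp_add]
      ring_nf
    have hmaxbd : ∀ z, |max 0 (v z)| ≤ 0 * Real.exp (0 * z)
        + Real.exp (Real.log ρ + -r / 2) * Real.exp (s * z) + 0 * Real.exp (0 * z) := by
      intro z
      rw [abs_of_nonneg (le_max_left _ _), ← hEv z]
      simpa using max_le_exp (v z)
    have hIntmax : Integrable (fun z => gaussianPDFReal s 1 z * max 0 (v z)) :=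
      integrable_pdf_mul s le_rfl (Real.exp_nonneg _) le_rfl hmaxmeas hmaxbd
    have hIntlog2v : Integrable (fun z => gaussianPDFReal s 1 z * (Real.log 2 + max 0 (v z))) := by
      have h := ((integrable_gaussianPDFReal s 1).const_mul (Real.log 2)).add hIntmax
      refine h.congr (Filter.Eventually.of_forall fun z => ?_)
      simp only [Pi.add_apply]
      ring
    have hIsle1 : (∫ z, gaussianPDFReal s 1 z * Real.log (L z))
        ≤ ∫ z, gaussianPDFReal s 1 z * (Real.log 2 + max 0 (v z)) :=
      integral_mono hInts hIntlog2v fun z =>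
        mul_le_mul_of_nonneg_left (hlogL_le z) (gaussianPDFReal_nonneg s 1 z)
    have hsplit2 : ∫ z, gaussianPDFReal s 1 z * (Real.log 2 + max 0 (v z))
        = Real.log 2 + ∫ z, gaussianPDFReal s 1 z * max 0 (v z) := by
      have hfe : (fun z => gaussianPDFReal s 1 z * (Real.log 2 + max 0 (v z)))
          = fun z => Real.log 2 * gaussianPDFReal s 1 z
              + gaussianPDFReal s 1 z * max 0 (v z) := by
        funext z; ring
      rw [hfe, integral_add ((integrable_gaussianPDFReal s 1).const_mul _) hIntmax,
        integral_const_mul, integral_gaussianPDFReal_eq_one _ one_ne_zero, mul_one]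
    set b : ℝ := Real.log ρ + r / 2 with hb
    have hshift2 : ∫ z, gaussianPDFReal s 1 z * max 0 (v z)
        = ∫ z, gaussianPDFReal 0 1 z * max 0 (b + s * z) := by
      rw [pdf_shift s (fun z => max 0 (v z))]
      congr 1
      funext z
      congr 2
      simp only [hv, hb]
      rw [mul_add, hs2]
      ring
    have hmax2bd : ∀ z, |max 0 (b + s * z)| ≤ 0 * Real.exp (0 * z)
        + Real.exp b * Real.exp (s * z) + 0 * Real.exp (0 * z) := by
      intro z
      rw [abs_of_nonneg (le_max_left _ _)]
      have h := max_le_exp (b + s * z)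
      rw [Real.exp_add] at h
      simpa using h
    have hIntmax2 : Integrable (fun z => gaussianPDFReal 0 1 z * max 0 (b + s * z)) :=
      integrable_pdf_mul 0 le_rfl (Real.exp_nonneg _) le_rfl (by fun_prop) hmax2bd
    have hIntgmax : Integrable (fun z => gaussianPDFReal 0 1 z * max 0 z) := by
      refine integrable_pdf_mul 0 (t₁ := 0) (t₂ := 1) (t₃ := 0) le_rfl zero_le_one le_rfl
        (by fun_prop) fun z => ?_
      rw [abs_of_nonneg (le_max_left _ _)]
      have h := max_le_exp z
      simpa using h
    have hIntmax3 : Integrable (fun z => gaussianPDFReal 0 1 z * (max 0 b + s * max 0 z)) := by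
      have h := ((integrable_gaussianPDFReal 0 1).const_mul (max 0 b)).add
        (hIntgmax.const_mul s)
      refine h.congr (Filter.Eventually.of_forall fun z => ?_)
      simp only [Pi.add_apply]
      ring
    have hmono3 : ∫ z, gaussianPDFReal 0 1 z * max 0 (b + s * z)
        ≤ ∫ z, gaussianPDFReal 0 1 z * (max 0 b + s * max 0 z) := by
      refine integral_mono hIntmax2 hIntmax3 fun z => ?_
      refine mul_le_mul_of_nonneg_left ?_ (gaussianPDFReal_nonneg 0 1 z)
      refine max_le (by positivity) ?_
      have h1 : b ≤ max 0 b := le_max_right 0 b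
      have h2 : s * z ≤ s * max 0 z := mul_le_mul_of_nonneg_left (le_max_right 0 z) hs0
      linarith
    have hval3 : ∫ z, gaussianPDFReal 0 1 z * (max 0 b + s * max 0 z)
        = max 0 b + s * (Real.sqrt (2 * π))⁻¹ := by
      have hfe : (fun z => gaussianPDFReal 0 1 z * (max 0 b + s * max 0 z))
          = fun z => max 0 b * gaussianPDFReal 0 1 z
              + s * (gaussianPDFReal 0 1 z * max 0 z) := by
        funext z; ring
      rw [hfe, integral_add ((integrable_gaussianPDFReal 0 1).const_mul _)
        (hIntgmax.const_mul s), integral_const_mul, integral_const_mul,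
        integral_gaussianPDFReal_eq_one _ one_ne_zero, integral_pdf_mul_max, mul_one]
    have hIsle : (∫ z, gaussianPDFReal s 1 z * Real.log (L z))
        ≤ Real.log 2 + max 0 b + s * (Real.sqrt (2 * π))⁻¹ := by
      calc (∫ z, gaussianPDFReal s 1 z * Real.log (L z))
          ≤ ∫ z, gaussianPDFReal s 1 z * (Real.log 2 + max 0 (v z)) := hIsle1
        _ = Real.log 2 + ∫ z, gaussianPDFReal s 1 z * max 0 (v z) := hsplit2
        _ = Real.log 2 + ∫ z, gaussianPDFReal 0 1 z * max 0 (b + s * z) := by rw [hshift2]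
        _ ≤ Real.log 2 + ∫ z, gaussianPDFReal 0 1 z * (max 0 b + s * max 0 z) := by
            linarith [hmono3]
        _ = Real.log 2 + max 0 b + s * (Real.sqrt (2 * π))⁻¹ := by rw [hval3]; ring
    rw [hpsi]
    have hfin1 : (1 - ρ) * (∫ z, gaussianPDFReal 0 1 z * Real.log (L z)) ≤ 0 :=
      mul_nonpos_iff.2 (Or.inl ⟨by linarith, hI0le⟩)
    have hfin2 : ρ * (∫ z, gaussianPDFReal s 1 z * Real.log (L z))
        ≤ ρ * (Real.log 2 + max 0 b + s * (Real.sqrt (2 * π))⁻¹) :=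
      mul_le_mul_of_nonneg_left hIsle h0.le
    linarith

/-- Lemma 3 of the paper: bounds on (1/α(ρ)) ψ_ρ((α(ρ)/ρ) r) for the
Bernoulli prior, where α(ρ) = γρ|ln ρ| (so that (α(ρ)/ρ) r = γ|ln ρ| r). -/
theorem psiB_bounds (γ : ℝ) (hγ : 0 < γ) :
    ∀ ρ ∈ Set.Ioo (0 : ℝ) 1, ∀ ε ∈ Set.Ioo (0 : ℝ) 1,
      ∀ r ∈ Set.Icc (0 : ℝ) (2 * (1 + ε) / γ),
        0 ≤ psiB ρ (γ * |Real.log ρ| * r) / (γ * ρ * |Real.log ρ|) ∧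
        psiB ρ (γ * |Real.log ρ| * r) / (γ * ρ * |Real.log ρ|)
          ≤ ε / γ + Real.log 2 / (γ * |Real.log ρ|)
            + (1 / γ) * Real.sqrt (2 / (π * |Real.log ρ|)) := by
  intro ρ hρ ε hε r hr
  obtain ⟨hρ0, hρ1⟩ := hρ
  obtain ⟨hε0, hε1⟩ := hε
  obtain ⟨hr0, hr2⟩ := hr
  have hlρ : Real.log ρ < 0 := Real.log_neg hρ0 hρ1
  set K := |Real.log ρ| with hK
  have hKpos : 0 < K := abs_pos.2 (ne_of_lt hlρ)
  have hKeq : K = -Real.log ρ := abs_of_neg hlρ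
  set r' := γ * K * r with hr'
  have hr'0 : 0 ≤ r' := by positivity
  obtain ⟨hlow, hup⟩ := core hρ0 hρ1 hr'0
  have hden : 0 < γ * ρ * K := by positivity
  have hr2' : r * γ ≤ 2 * (1 + ε) := (le_div_iff₀ hγ).mp hr2
  constructor
  · exact div_nonneg hlow hden.le
  · have hb : max 0 (Real.log ρ + r' / 2) ≤ ε * K := by
      refine max_le (by positivity) ?_
      have h2 : r' / 2 ≤ (1 + ε) * K := by
        rw [hr']
        nlinarith [mul_le_mul_of_nonneg_right hr2' hKpos.le]
      linarith [hKeq ▸ h2]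
    have hπ := Real.pi_pos
    have hsq : Real.sqrt r' * (Real.sqrt (2 * π))⁻¹ ≤ K * Real.sqrt (2 / (π * K)) := by
      have lhs_eq : Real.sqrt r' * (Real.sqrt (2 * π))⁻¹ = Real.sqrt (r' / (2 * π)) := by
        rw [Real.sqrt_div hr'0, div_eq_mul_inv]
      have rhs_eq : K * Real.sqrt (2 / (π * K)) = Real.sqrt (2 * K / π) := by
        rw [← Real.sqrt_sq hKpos.le, ← Real.sqrt_mul (sq_nonneg K)]
        rw [Real.sqrt_sq hKpos.le]
        congr 1
        field_simp
      rw [lhs_eq, rhs_eq]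
      apply Real.sqrt_le_sqrt
      have h3 : r' ≤ 2 * (1 + ε) * K := by
        rw [hr']
        nlinarith [mul_le_mul_of_nonneg_right hr2' hKpos.le]
      rw [div_le_div_iff₀ (by positivity) hπ]
      nlinarith [mul_le_mul_of_nonneg_right h3 hπ.le,
        mul_nonneg (mul_nonneg (by linarith : (0:ℝ) ≤ 1 - ε) hKpos.le) hπ.le]
    have hup2 : psiB ρ r' ≤ ρ * (Real.log 2 + ε * K + K * Real.sqrt (2 / (π * K))) := by
      refine le_trans hup ?_
      refine mul_le_mul_of_nonneg_left ?_ hρ0.le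
      linarith [hb, hsq]
    rw [div_le_iff₀ hden]
    have hgne : γ ≠ 0 := ne_of_gt hγ
    have hKne : K ≠ 0 := ne_of_gt hKpos
    calc psiB ρ r' ≤ ρ * (Real.log 2 + ε * K + K * Real.sqrt (2 / (π * K))) := hup2
      _ = (ε / γ + Real.log 2 / (γ * K) + 1 / γ * Real.sqrt (2 / (π * K)))
          * (γ * ρ * K) := by
        field_simp
        ring


end BernoulliPrior
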